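/- On a simple tropical curve C with n ≥ 2 leaves, any exact 1-form is uniquely determined by its residues: if ω₁ and ω₂ are exact 1-forms on C with the same residues at all leaves, then ω₁ = ω₂. -/

import Mathlib

open Finset

section GraphSetup

variable {V D : Type} [Fintype V] [Fintype D] [DecidableEq V] [DecidableEq D]

/-- A loop in a graph given by darts: a nonempty cyclic chain of darts, injective on
(unoriented) edges.  `rev` is orientation reversal and `tail` the initial vertex of
a dart; the head of `d` is `tail (rev d)`. -/
def IsLoop (rev : D → D) (tail : D → V) (c : List D) : Prop :=
  c ≠ [] ∧ c.Nodup ∧ (∀ d ∈ c, rev d ∉ c) ∧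
    c.Chain' (fun d d' => tail (rev d) = tail d') ∧
    ∀ a ∈ c.head?, ∀ b ∈ c.getLast?, tail (rev b) = tail a

/-- The integral of a 1-form `ω` along a loop `c`: `Σ l(e)·ω(e⃗)`. -/
def loopIntegral (len : D → ℝ) (ω : D → ℝ) (c : List D) : ℝ :=
  (c.map fun d => len d * ω d).sum

/-- A 1-form on the graph: antisymmetric under orientation reversal and satisfying
the Kirchhoff balancing condition at every internal (non-leaf) vertex. -/
def IsBalanced (rev : D → D) (tail : D → V) (isLeaf : V → Prop) [DecidablePred isLeaf]
    (ω : D → ℝ) : Prop :=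
  (∀ d, ω (rev d) = - ω d) ∧
    ∀ v, ¬ isLeaf v → ∑ d ∈ univ.filter (fun d => tail d = v), ω d = 0

/-- A 1-form is exact if its integral over every loop vanishes. -/
def IsExact (rev : D → D) (tail : D → V) (len : D → ℝ) (ω : D → ℝ) : Prop :=
  ∀ c : List D, IsLoop rev tail c → loopIntegral len ω c = 0

/-- A 1-form is holomorphic if its residues (its values on leaf edges) all vanish. -/
def IsHolomorphic (tail : D → V) (isLeaf : V → Prop) (ω : D → ℝ) : Prop :=
  ∀ d, isLeaf (tail d) → ω d = 0

/-- Connectivity of the graph: any two vertices are joined by a chain of darts. -/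
def GraphConnected (rev : D → D) (tail : D → V) : Prop :=
  ∀ v w : V, Relation.ReflTransGen (fun x y => ∃ d, tail d = x ∧ tail (rev d) = y) v w

end GraphSetup

theorem aux_holo_zero {V D : Type} [Fintype V] [Fintype D] [DecidableEq V] [DecidableEq D]
    (rev : D → D) (tail : D → V) (isLeaf : V → Prop) [DecidablePred isLeaf]
    (len : D → ℝ) (hlen : ∀ d, 0 < len d) (ω : D → ℝ)
    (hb : IsBalanced rev tail isLeaf ω)
    (he : IsExact rev tail len ω)
    (hh : IsHolomorphic tail isLeaf ω) :
    ∀ d, ω d = 0 := by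
  obtain ⟨hanti, hkir⟩ := hb
  by_contra hne
  push_neg at hne
  obtain ⟨d₁, hd₁⟩ := hne
  -- get a dart with positive value
  have hpos : ∃ d, 0 < ω d := by
    rcases lt_trichotomy (ω d₁) 0 with h | h | h
    · exact ⟨rev d₁, by rw [hanti]; linarith⟩
    · exact absurd h hd₁
    · exact ⟨d₁, h⟩
  obtain ⟨d₀, hd₀⟩ := hpos
  -- step: from any positive dart, continue with a positive dart at its head
  have step : ∀ d : D, 0 < ω d → ∃ d', 0 < ω d' ∧ tail d' = tail (rev d) := by
    intro d hd
    by_cases hv : isLeaf (tail (rev d))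
    · exfalso
      have h0 := hh (rev d) hv
      have h1 := hanti d
      linarith
    · have hsum := hkir (tail (rev d)) hv
      by_contra hcon
      push_neg at hcon
      have hmem : rev d ∈ univ.filter (fun d' => tail d' = tail (rev d)) := by
        simp
      have hrest : ∑ x ∈ (univ.filter (fun d' => tail d' = tail (rev d))).erase (rev d),
          ω x ≤ 0 := by
        apply Finset.sum_nonpos
        intro x hx
        rcases Finset.mem_erase.mp hx with ⟨_, hx2⟩
        rcases Finset.mem_filter.mp hx2 with ⟨_, hx3⟩
        by_contra hxx
        push_neg at hxx
        exact hcon x hxx hx3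
      have : ω (rev d) + ∑ x ∈ (univ.filter (fun d' => tail d' = tail (rev d))).erase (rev d),
          ω x = ∑ x ∈ univ.filter (fun d' => tail d' = tail (rev d)), ω x :=
        Finset.add_sum_erase _ _ hmem
      rw [hsum] at this
      have hneg : ω (rev d) < 0 := by rw [hanti]; linarith
      linarith
  choose nxt hnxt1 hnxt2 using step
  -- build infinite walk of positive darts
  let g : ℕ → {d : D // 0 < ω d} := fun n =>
    Nat.rec ⟨d₀, hd₀⟩ (fun _ p => ⟨nxt p.1 p.2, hnxt1 p.1 p.2⟩) n
  let f : ℕ → D := fun n => (g n).1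
  have hfpos : ∀ n, 0 < ω (f n) := fun n => (g n).2
  have hfstep : ∀ n, tail (f (n + 1)) = tail (rev (f n)) := fun n => hnxt2 _ _
  -- pigeonhole
  have hni : ∃ a b : ℕ, a ≠ b ∧ f a = f b :=
    Finite.exists_ne_map_eq_of_infinite f
  have hP : ∃ j, ∃ i, i < j ∧ f i = f j := by
    obtain ⟨a, b, hab, hfab⟩ := hni
    rcases lt_or_gt_of_ne hab with h | h
    · exact ⟨b, a, h, hfab⟩
    · exact ⟨a, b, h, hfab.symm⟩
  classical
  let j := Nat.find hP
  obtain ⟨i, hij, hfij⟩ : ∃ i, i < j ∧ f i = f j := Nat.find_spec hP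
  have hmin : ∀ b < j, ¬ ∃ i, i < b ∧ f i = f b := fun b hb => Nat.find_min hP hb
  have hinj : ∀ a b, a < j → b < j → f a = f b → a = b := by
    intro a b ha hb hf
    rcases lt_trichotomy a b with h | h | h
    · exact absurd ⟨a, h, hf⟩ (hmin b hb)
    · exact h
    · exact absurd ⟨b, h, hf.symm⟩ (hmin a ha)
  set m := j - i with hm
  have hm0 : 0 < m := Nat.sub_pos_of_lt hij
  let c : List D := (List.range m).map (fun k => f (i + k))
  have hclen : c.length = m := by simp [c]
  have hcne : c ≠ [] := by
    intro h
    rw [← List.length_eq_zero_iff] at h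
    omega
  have hcmem : ∀ d ∈ c, ∃ k, k < m ∧ d = f (i + k) := by
    intro d hd
    simp only [c, List.mem_map, List.mem_range] at hd
    obtain ⟨k, hk, hkd⟩ := hd
    exact ⟨k, hk, hkd.symm⟩
  have hcpos : ∀ d ∈ c, 0 < ω d := by
    intro d hd
    obtain ⟨k, _, rfl⟩ := hcmem d hd
    exact hfpos _
  have hnodup : c.Nodup := by
    apply List.Nodup.map_on
    · intro x hx y hy hxy
      simp only [List.mem_range] at hx hy
      have := hinj (i + x) (i + y) (by omega) (by omega) hxy
      omega
    · exact List.nodup_range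
  have hrevfree : ∀ d ∈ c, rev d ∉ c := by
    intro d hd hrd
    have h1 := hcpos d hd
    have h2 := hcpos (rev d) hrd
    rw [hanti] at h2
    linarith
  have hchain : c.Chain' (fun d d' => tail (rev d) = tail d') := by
    rw [List.Chain', List.isChain_iff_getElem]
    intro t ht
    simp only [c, List.get_eq_getElem, List.getElem_map, List.getElem_range]
    rw [show i + (t + 1) = (i + t) + 1 by ring]
    exact (hfstep (i + t)).symm
  have hhead : ∀ a ∈ c.head?, ∀ b ∈ c.getLast?, tail (rev b) = tail a := by
    intro a ha b hb
    have hce : c.head? = some a := ha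
    have hcl : c.getLast? = some b := hb
    have hane : a = f i := by
      have h0 := (List.head?_eq_getElem? (l := c)).symm.trans hce
      simp only [c, List.getElem?_map, List.getElem?_range hm0, Option.map_some] at h0
      simpa using (Option.some_injective _ h0).symm
    have hbne : b = f (i + (m - 1)) := by
      have h0 := (List.getLast?_eq_getElem? (l := c)).symm.trans hcl
      rw [hclen] at h0
      simp only [c, List.getElem?_map,
        List.getElem?_range (show m - 1 < m by omega), Option.map_some] at h0
      exact (Option.some_injective _ h0).symm
    rw [hane, hbne]
    have : i + (m - 1) + 1 = j := by omega
    rw [← hfstep, this, ← hfij]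
  have hloop : IsLoop rev tail c := ⟨hcne, hnodup, hrevfree, hchain, hhead⟩
  have hint := he c hloop
  have hpos : 0 < loopIntegral len ω c := by
    unfold loopIntegral
    apply List.sum_pos
    · intro x hx
      simp only [List.mem_map] at hx
      obtain ⟨d, hd, rfl⟩ := hx
      exact mul_pos (hlen d) (hcpos d hd)
    · simpa using hcne
  linarith

/-- On a simple tropical curve with `n ≥ 2` leaves, an exact 1-form is uniquely
determined by its residues: two exact balanced 1-forms with the same residues at
all leaves are equal. -/
theorem stmt5 {V D : Type} [Fintype V] [Fintype D] [DecidableEq V] [DecidableEq D]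
    (rev : D → D) (tail : D → V) (isLeaf : V → Prop) [DecidablePred isLeaf]
    (len : D → ℝ) (n : ℕ)
    (hrev : ∀ d, rev (rev d) = d) (hrevne : ∀ d, rev d ≠ d)
    (hconn : GraphConnected rev tail)
    (hleaf : ∀ v, isLeaf v ↔ (univ.filter fun d => tail d = v).card = 1)
    (htri : ∀ v, ¬ isLeaf v → (univ.filter fun d => tail d = v).card = 3)
    (hlen : ∀ d, 0 < len d) (hlensym : ∀ d, len (rev d) = len d)
    (hn : (univ.filter fun v => isLeaf v).card = n) (hn2 : 2 ≤ n)
    (ω₁ ω₂ : D → ℝ)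
    (h₁ : IsBalanced rev tail isLeaf ω₁) (h₂ : IsBalanced rev tail isLeaf ω₂)
    (he₁ : IsExact rev tail len ω₁) (he₂ : IsExact rev tail len ω₂)
    (hres : ∀ d, isLeaf (tail d) → ω₁ d = ω₂ d) :
    ω₁ = ω₂ := by
  have hb : IsBalanced rev tail isLeaf (fun d => ω₁ d - ω₂ d) := by
    constructor
    · intro d
      simp only [h₁.1 d, h₂.1 d]
      ring
    · intro v hv
      have e1 := h₁.2 v hv
      have e2 := h₂.2 v hv
      rw [Finset.sum_sub_distrib, e1, e2, sub_zero]
  have he : IsExact rev tail len (fun d => ω₁ d - ω₂ d) := by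
    intro c hc
    have e1 := he₁ c hc
    have e2 := he₂ c hc
    unfold loopIntegral at *
    have : ∀ l : List D, ((l.map fun d => len d * (ω₁ d - ω₂ d)).sum)
        = (l.map fun d => len d * ω₁ d).sum - (l.map fun d => len d * ω₂ d).sum := by
      intro l
      induction l with
      | nil => simp
      | cons x xs ih => simp [ih]; ring
    rw [this, e1, e2, sub_zero]
  have hh : IsHolomorphic tail isLeaf (fun d => ω₁ d - ω₂ d) := by
    intro d hd
    simp [hres d hd]
  have := aux_holo_zero rev tail isLeaf len hlen _ hb he hh
  funext d
  have := this d
  linarith
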